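/- Let N ≥ 2 and n ≥ 2 be integers, A a commutative ring, and q ∈ A invertible. Then there is a (unique) group homomorphism from the symmetric group 𝔖_n to the group of invertible elements of the n-fold tensor product M_N(A)^{⊗n} sending each simple transposition σ_i = (i, i+1) to P^h_{i,i+1}, the copy of the h-permutation operator P^h acting on tensor legs i and i+1. -/

import Mathlib

/-- The `q`-deformed permutation operator
`P^h = Σ_i e_{ii}⊗e_{ii} + q Σ_{i>j} e_{ij}⊗e_{ji} + q⁻¹ Σ_{i<j} e_{ij}⊗e_{ji}`
on `M_N ⊗ M_N`; here `qq` stands for `q` and `qi` for `q⁻¹`. -/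
def Ph (N : ℕ) {R : Type*} [CommRing R] (qq qi : R) :
    Matrix (Fin N × Fin N) (Fin N × Fin N) R := fun p r =>
  if p.1 = r.2 ∧ p.2 = r.1 then
    (if p.1 = p.2 then 1 else if p.2 < p.1 then qq else qi)
  else 0

/-- Copy of a two-leg operator acting on legs `i` and `j` of the `n`-fold tensor
product `M_N(R)^{⊗n}`, realized as matrices indexed by tuples `Fin n → Fin N`. -/
def leg2 {N : ℕ} (n : ℕ) {R : Type*} [CommRing R]
    (M : Matrix (Fin N × Fin N) (Fin N × Fin N) R) (i j : Fin n) :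
    Matrix (Fin n → Fin N) (Fin n → Fin N) R := fun p r =>
  M (p i, p j) (r i, r j) *
    ∏ k ∈ Finset.univ \ {i, j}, (if p k = r k then (1 : R) else 0)

namespace PhAux

variable {N n : ℕ} {R : Type*} [CommRing R]

/-- elementary `q`-weight -/
def hq (qq qi : R) (a b : Fin N) : R := if a = b then 1 else if a < b then qq else qi

lemma hq_mul_hq {qq qi : R} (hqi : qq * qi = 1) (a b : Fin N) :
    hq qq qi a b * hq qq qi b a = 1 := by
  unfold hq
  rcases lt_trichotomy a b with h | h | h
  · rw [if_neg h.ne, if_pos h, if_neg h.ne', if_neg (not_lt.mpr h.le), hqi]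
  · simp [h]
  · rw [if_neg h.ne', if_neg (not_lt.mpr h.le), if_neg h.ne, if_pos h, mul_comm, hqi]

/-- the finset of ordered pairs `i < j` -/
def pairsF (n : ℕ) : Finset (Fin n × Fin n) := Finset.univ.filter fun x => x.1 < x.2

/-- image of a sorted pair under `σ`, re-sorted -/
def sw (σ : Equiv.Perm (Fin n)) (x : Fin n × Fin n) : Fin n × Fin n :=
  if σ x.1 < σ x.2 then (σ x.1, σ x.2) else (σ x.2, σ x.1)

lemma sw_mem (σ : Equiv.Perm (Fin n)) {x : Fin n × Fin n} (hx : x ∈ pairsF n) :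
    sw σ x ∈ pairsF n := by
  have hx' : x.1 < x.2 := (Finset.mem_filter.mp hx).2
  have hne : σ x.1 ≠ σ x.2 := fun h => hx'.ne (σ.injective h)
  unfold sw
  rcases lt_or_gt_of_ne hne with h | h
  · rw [if_pos h]; exact Finset.mem_filter.mpr ⟨Finset.mem_univ _, h⟩
  · rw [if_neg (not_lt.mpr h.le)]; exact Finset.mem_filter.mpr ⟨Finset.mem_univ _, h⟩

lemma sw_sw (σ : Equiv.Perm (Fin n)) {x : Fin n × Fin n} (hx : x ∈ pairsF n) :
    sw σ⁻¹ (sw σ x) = x := by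
  have hx' : x.1 < x.2 := (Finset.mem_filter.mp hx).2
  have hne : σ x.1 ≠ σ x.2 := fun h => hx'.ne (σ.injective h)
  unfold sw
  rcases lt_or_gt_of_ne hne with h | h
  · rw [if_pos h]
    simp only [Equiv.Perm.inv_def, Equiv.symm_apply_apply]
    rw [if_pos hx']
  · rw [if_neg (not_lt.mpr h.le)]
    simp only [Equiv.Perm.inv_def, Equiv.symm_apply_apply]
    rw [if_neg (not_lt.mpr hx'.le)]

lemma prod_sw (σ : Equiv.Perm (Fin n)) (f : Fin n × Fin n → R) :
    ∏ x ∈ pairsF n, f (sw σ x) = ∏ x ∈ pairsF n, f x := by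
  refine Finset.prod_nbij' (sw σ) (sw σ⁻¹) (fun a ha => sw_mem σ ha)
    (fun a ha => sw_mem σ⁻¹ ha) (fun a ha => sw_sw σ ha)
    (fun a ha => by
      have := sw_sw σ⁻¹ (x := a) ha
      rwa [inv_inv] at this) (fun a _ => rfl)

/-- the `q`-weight of a permutation at a point `r`, a product over inversions -/
def cf (qq qi : R) (σ : Equiv.Perm (Fin n)) (r : Fin n → Fin N) : R :=
  ∏ x ∈ pairsF n, if σ x.2 < σ x.1 then hq qq qi (r (σ x.2)) (r (σ x.1)) else 1

lemma cf_one (qq qi : R) (r : Fin n → Fin N) : cf qq qi 1 r = 1 := by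
  refine Finset.prod_eq_one fun x hx => ?_
  have hx' : x.1 < x.2 := (Finset.mem_filter.mp hx).2
  simp [not_lt.mpr hx'.le]

/-- the cocycle identity -/
lemma cf_mul {qq qi : R} (hqi : qq * qi = 1) (σ τ : Equiv.Perm (Fin n))
    (r : Fin n → Fin N) :
    cf (N := N) qq qi (τ * σ) r = cf qq qi σ (r ∘ τ) * cf qq qi τ r := by
  have key : ∀ x ∈ pairsF n,
      (if (τ * σ) x.2 < (τ * σ) x.1 then
          hq qq qi (r ((τ * σ) x.2)) (r ((τ * σ) x.1)) else 1)
      = (if σ x.2 < σ x.1 then hq qq qi ((r ∘ τ) (σ x.2)) ((r ∘ τ) (σ x.1)) else 1)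
        * (if τ (sw σ x).2 < τ (sw σ x).1 then
            hq qq qi (r (τ (sw σ x).2)) (r (τ (sw σ x).1)) else 1) := by
    intro x hx
    have hx' : x.1 < x.2 := (Finset.mem_filter.mp hx).2
    have hne : σ x.1 ≠ σ x.2 := fun h => hx'.ne (σ.injective h)
    simp only [Equiv.Perm.mul_apply, Function.comp_apply, sw]
    rcases lt_or_gt_of_ne hne with h | h
    · simp only [if_pos h, if_neg (not_lt.mpr h.le), one_mul]; rfl
    · simp only [if_neg (not_lt.mpr h.le), if_pos h]
      have hne2 : τ (σ x.2) ≠ τ (σ x.1) := fun he => h.ne (τ.injective he)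
      rcases lt_or_gt_of_ne hne2 with h2 | h2
      · simp only [if_pos h2, if_neg (not_lt.mpr h2.le), mul_one]; exact if_pos h2
      · simp only [if_neg (not_lt.mpr h2.le), if_pos h2, hq_mul_hq hqi _ _]; exact if_neg (not_lt.mpr h2.le)
  calc cf (N := N) qq qi (τ * σ) r
      = ∏ x ∈ pairsF n,
          ((if σ x.2 < σ x.1 then hq qq qi ((r ∘ τ) (σ x.2)) ((r ∘ τ) (σ x.1)) else 1)
          * (if τ (sw σ x).2 < τ (sw σ x).1 then
              hq qq qi (r (τ (sw σ x).2)) (r (τ (sw σ x).1)) else 1)) :=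
        Finset.prod_congr rfl key
    _ = cf qq qi σ (r ∘ τ) * cf qq qi τ r := by
        rw [Finset.prod_mul_distrib]
        congr 1
        exact prod_sw σ fun y =>
          if τ y.2 < τ y.1 then hq qq qi (r (τ y.2)) (r (τ y.1)) else 1

/-- matrix of a permutation with `q`-weights -/
def E (N : ℕ) (qq qi : R) (σ : Equiv.Perm (Fin n)) :
    Matrix (Fin n → Fin N) (Fin n → Fin N) R := fun p r =>
  if p = r ∘ σ then cf qq qi σ r else 0

lemma E_one (qq qi : R) : E (n := n) N qq qi 1 = 1 := by
  funext p r
  simp [E, Matrix.one_apply, cf_one]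

lemma E_mul {qq qi : R} (hqi : qq * qi = 1) (σ τ : Equiv.Perm (Fin n)) :
    E (n := n) N qq qi σ * E N qq qi τ = E N qq qi (τ * σ) := by
  funext p r
  rw [Matrix.mul_apply]
  have step : ∀ m : Fin n → Fin N,
      E (n := n) N qq qi σ p m * E N qq qi τ m r
      = if m = r ∘ τ then (if p = m ∘ σ then cf qq qi σ m else 0) * cf qq qi τ r
        else 0 := by
    intro m
    simp only [E]
    by_cases hm : m = r ∘ τ <;> simp [hm]
  rw [Finset.sum_congr rfl fun m _ => step m, Finset.sum_ite_eq' Finset.univ (r ∘ τ)]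
  simp only [Finset.mem_univ, if_true]
  have hcomp : (r ∘ τ) ∘ σ = r ∘ (τ * σ) := rfl
  rw [hcomp]
  simp only [E]
  by_cases hp : p = r ∘ (τ * σ)
  · rw [if_pos hp, if_pos hp, cf_mul hqi]
  · rw [if_neg hp, if_neg hp, zero_mul]

lemma cf_swap {qq qi : R} (a b : Fin n) (hab : a < b) (hadj : ∀ k, a < k → b ≤ k)
    (r : Fin n → Fin N) :
    cf qq qi (Equiv.swap a b) r = hq qq qi (r a) (r b) := by
  unfold cf
  rw [Finset.prod_eq_single (a, b)]
  · simp only [Equiv.swap_apply_left, Equiv.swap_apply_right]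
    rw [if_pos hab]
  · intro x hx hne
    have hx' : x.1 < x.2 := (Finset.mem_filter.mp hx).2
    refine if_neg (not_lt.mpr ?_)
    by_cases h1a : x.1 = a
    · by_cases h2b : x.2 = b
      · exact absurd (Prod.ext h1a h2b) hne
      · have h2a : x.2 ≠ a := fun h => (h1a ▸ h ▸ hx').ne rfl
        rw [h1a, Equiv.swap_apply_left, Equiv.swap_apply_of_ne_of_ne h2a h2b]
        exact le_of_lt (lt_of_le_of_ne (hadj _ (h1a ▸ hx')) (Ne.symm h2b))
    · by_cases h1b : x.1 = b
      · have h2a : x.2 ≠ a := fun h => absurd (h ▸ h1b ▸ hx') (not_lt.mpr hab.le)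
        have h2b : x.2 ≠ b := fun h => (h1b ▸ h ▸ hx').ne rfl
        rw [h1b, Equiv.swap_apply_right, Equiv.swap_apply_of_ne_of_ne h2a h2b]
        exact le_of_lt (lt_trans hab (h1b ▸ hx'))
      · rw [Equiv.swap_apply_of_ne_of_ne h1a h1b]
        by_cases h2a : x.2 = a
        · rw [h2a, Equiv.swap_apply_left]
          exact le_of_lt (lt_trans (h2a ▸ hx') hab)
        · by_cases h2b : x.2 = b
          · rw [h2b, Equiv.swap_apply_right]
            by_contra hcon
            push_neg at hcon
            exact absurd (h2b ▸ hadj _ hcon) (not_le.mpr hx')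
          · rw [Equiv.swap_apply_of_ne_of_ne h2a h2b]
            exact hx'.le
  · intro hnm
    exact absurd (show (a, b) ∈ pairsF n from
      Finset.mem_filter.mpr ⟨Finset.mem_univ _, hab⟩) hnm

lemma E_swap {qq qi : R} (a b : Fin n) (hab : a < b) (hadj : ∀ k, a < k → b ≤ k) :
    E N qq qi (Equiv.swap a b) = leg2 n (Ph N qq qi) a b := by
  funext p r
  have hswa : (r ∘ Equiv.swap a b) a = r b := by simp
  have hswb : (r ∘ Equiv.swap a b) b = r a := by simp
  by_cases hpr : p = r ∘ Equiv.swap a b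
  · rw [E, if_pos hpr, cf_swap a b hab hadj]
    have hpa : p a = r b := by rw [hpr]; exact hswa
    have hpb : p b = r a := by rw [hpr]; exact hswb
    have hprod : ∏ k ∈ Finset.univ \ {a, b}, (if p k = r k then (1 : R) else 0) = 1 := by
      refine Finset.prod_eq_one fun k hk => ?_
      rw [Finset.mem_sdiff, Finset.mem_insert, Finset.mem_singleton] at hk
      push_neg at hk
      rw [if_pos]
      rw [hpr]
      simp [Equiv.swap_apply_of_ne_of_ne hk.2.1 hk.2.2]
    rw [leg2, hprod, mul_one, hpa, hpb, Ph]
    rw [if_pos ⟨rfl, rfl⟩]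
    unfold hq
    by_cases he : r a = r b
    · rw [if_pos he.symm, if_pos he]
    · rw [if_neg (Ne.symm he), if_neg he]
  · rw [E, if_neg hpr, leg2]
    by_cases hc : p a = r b ∧ p b = r a
    · have : ∃ k, k ≠ a ∧ k ≠ b ∧ p k ≠ r k := by
        by_contra hcon
        push_neg at hcon
        apply hpr
        funext k
        by_cases hka : k = a
        · rw [hka, hswa, hc.1]
        · by_cases hkb : k = b
          · rw [hkb, hswb, hc.2]
          · rw [Function.comp_apply, Equiv.swap_apply_of_ne_of_ne hka hkb]
            exact hcon k hka hkb
      obtain ⟨k, hka, hkb, hk⟩ := this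
      have hkmem : k ∈ Finset.univ \ {a, b} := by
        rw [Finset.mem_sdiff, Finset.mem_insert, Finset.mem_singleton]
        exact ⟨Finset.mem_univ _, by tauto⟩
      rw [Finset.prod_eq_zero hkmem (by rw [if_neg hk]), mul_zero]
    · rw [Ph]
      rw [if_neg hc, zero_mul]

/-- the adjacent transpositions generate the symmetric group (as a monoid) -/
lemma adj_closure (n : ℕ) :
    Submonoid.closure {g : Equiv.Perm (Fin n) |
      ∃ (i : ℕ) (h : i + 1 < n),
        g = Equiv.swap ⟨i, Nat.lt_of_succ_lt h⟩ ⟨i + 1, h⟩} = ⊤ := by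
  cases n with
  | zero =>
    apply top_unique
    intro g _
    have hg : g = 1 := Equiv.ext fun x => x.elim0
    rw [hg]
    exact one_mem _
  | succ m =>
    apply top_unique
    rw [← Equiv.Perm.mclosure_swap_castSucc_succ m]
    apply Submonoid.closure_le.mpr
    rintro _ ⟨i, rfl⟩
    apply Submonoid.subset_closure
    refine ⟨(i : ℕ), Nat.succ_lt_succ i.isLt, ?_⟩
    congr 1 <;> exact Fin.ext rfl

end PhAux

theorem Ph_symmetric_group_action (N n : ℕ) (hN : 2 ≤ N)
    (A : Type*) [CommRing A] (q : Aˣ) :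
    ∃! φ : Equiv.Perm (Fin n) →* (Matrix (Fin n → Fin N) (Fin n → Fin N) A)ˣ,
      ∀ (i : ℕ) (h : i + 1 < n),
        ((φ (Equiv.swap ⟨i, Nat.lt_of_succ_lt h⟩ ⟨i + 1, h⟩) : _ˣ) :
            Matrix (Fin n → Fin N) (Fin n → Fin N) A) =
          leg2 n (Ph N ((q : A)) ((q⁻¹ : Aˣ) : A))
            ⟨i, Nat.lt_of_succ_lt h⟩ ⟨i + 1, h⟩ := by
  classical
  set qq : A := (q : A)
  set qi : A := ((q⁻¹ : Aˣ) : A)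
  have hqi : qq * qi = 1 := q.mul_inv
  -- the homomorphism
  let φ0 : Equiv.Perm (Fin n) →* (Matrix (Fin n → Fin N) (Fin n → Fin N) A)ˣ :=
  { toFun := fun σ =>
      ⟨PhAux.E N qq qi σ⁻¹, PhAux.E N qq qi σ,
        by rw [PhAux.E_mul hqi, mul_inv_cancel, PhAux.E_one],
        by rw [PhAux.E_mul hqi, inv_mul_cancel, PhAux.E_one]⟩
    map_one' := by
      apply Units.ext
      simp [PhAux.E_one]
    map_mul' := fun σ τ => by
      apply Units.ext
      show PhAux.E N qq qi (σ * τ)⁻¹ = PhAux.E N qq qi σ⁻¹ * PhAux.E N qq qi τ⁻¹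
      rw [PhAux.E_mul hqi, mul_inv_rev] }
  have hadjkey : ∀ (i : ℕ) (h : i + 1 < n),
      PhAux.E N qq qi (Equiv.swap (⟨i, Nat.lt_of_succ_lt h⟩ : Fin n) ⟨i + 1, h⟩)
        = leg2 n (Ph N qq qi) ⟨i, Nat.lt_of_succ_lt h⟩ ⟨i + 1, h⟩ := by
    intro i h
    refine PhAux.E_swap _ _ ?_ ?_
    · exact Fin.mk_lt_mk.mpr (Nat.lt_succ_self i)
    · intro k hk
      rw [Fin.lt_def] at hk
      rw [Fin.le_def]
      simpa using hk
  have hφ0 : ∀ (i : ℕ) (h : i + 1 < n),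
      ((φ0 (Equiv.swap ⟨i, Nat.lt_of_succ_lt h⟩ ⟨i + 1, h⟩) : _ˣ) :
          Matrix (Fin n → Fin N) (Fin n → Fin N) A) =
        leg2 n (Ph N qq qi) ⟨i, Nat.lt_of_succ_lt h⟩ ⟨i + 1, h⟩ := by
    intro i h
    show PhAux.E N qq qi (Equiv.swap (⟨i, Nat.lt_of_succ_lt h⟩ : Fin n) ⟨i + 1, h⟩)⁻¹
        = _
    rw [Equiv.swap_inv]
    exact hadjkey i h
  refine ⟨φ0, hφ0, ?_⟩
  intro φ hφ
  apply MonoidHom.eq_of_eqOn_denseM (PhAux.adj_closure n)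
  rintro g ⟨i, h, rfl⟩
  apply Units.ext
  rw [hφ i h, hφ0 i h]
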